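/- Let R = σ_{S1}² v₁v₁' + σ_{S2}² v₂v₂' + σ² I where v₁, v₂ ∈ ℂⁿ are linearly independent and σ_{S1}², σ_{S2}² > 0. Then the two largest eigenvalues of R are λ_{1,2} = σ² + (σ_{S1}²‖v₁‖² + σ_{S2}²‖v₂‖²)/2 ± (1/2)√((σ_{S1}²‖v₁‖² − σ_{S2}²‖v₂‖²)² + 4σ_{S1}²σ_{S2}²|⟨v₁,v₂⟩|²), and all other eigenvalues equal σ². -/

import Mathlib

open Matrix Polynomial

lemma detC (n : ℕ) (hn : 2 ≤ n) (v₁ v₂ : EuclideanSpace ℂ (Fin n)) (σS1 σS2 : ℝ)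
    (s : ℂ) (hs : s ≠ 0)
    (hA : ∀ (U : Matrix (Fin n) (Fin 2) ℂ) (V : Matrix (Fin 2) (Fin n) ℂ),
      det (s • (1 : Matrix (Fin n) (Fin n) ℂ) - U * V)
        = s ^ (n - 2) * det (s • (1 : Matrix (Fin 2) (Fin 2) ℂ) - V * U)) :
    det (s • (1 : Matrix (Fin n) (Fin n) ℂ)
        - ((σS1 : ℂ) • vecMulVec v₁ (star v₁) + (σS2 : ℂ) • vecMulVec v₂ (star v₂)))
      = s ^ (n - 2) * ((s - (σS1 : ℂ) * (‖v₁‖ : ℂ) ^ 2) * (s - (σS2 : ℂ) * (‖v₂‖ : ℂ) ^ 2)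
          - (σS1 : ℂ) * (σS2 : ℂ) * (‖(inner ℂ v₁ v₂ : ℂ)‖ : ℂ) ^ 2) := by
  set U : Matrix (Fin n) (Fin 2) ℂ := Matrix.of fun i k => ![(σS1 : ℂ) * v₁ i, (σS2 : ℂ) * v₂ i] k
  set V : Matrix (Fin 2) (Fin n) ℂ := Matrix.of fun k j => ![star (v₁ j), star (v₂ j)] k
  have hUV : U * V = (σS1 : ℂ) • vecMulVec v₁ (star v₁) + (σS2 : ℂ) • vecMulVec v₂ (star v₂) := by
    ext i j
    simp [U, V, mul_apply, Fin.sum_univ_two, vecMulVec_apply]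
    ring
  rw [← hUV, hA U V]
  congr 1
  rw [det_fin_two]
  have e00 : (V * U) 0 0 = (σS1 : ℂ) * (inner ℂ v₁ v₁ : ℂ) := by
    simp [U, V, mul_apply, PiLp.inner_apply, Finset.mul_sum, -inner_self_eq_norm_sq_to_K]
    congr 1; ext j; ring
  have e11 : (V * U) 1 1 = (σS2 : ℂ) * (inner ℂ v₂ v₂ : ℂ) := by
    simp [U, V, mul_apply, PiLp.inner_apply, Finset.mul_sum, -inner_self_eq_norm_sq_to_K]
    congr 1; ext j; ring
  have e01 : (V * U) 0 1 = (σS2 : ℂ) * (inner ℂ v₁ v₂ : ℂ) := by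
    simp [U, V, mul_apply, PiLp.inner_apply, Finset.mul_sum]
    congr 1; ext j; ring
  have e10 : (V * U) 1 0 = (σS1 : ℂ) * (inner ℂ v₂ v₁ : ℂ) := by
    simp [U, V, mul_apply, PiLp.inner_apply, Finset.mul_sum]
    congr 1; ext j; ring
  have hii : (inner ℂ v₁ v₁ : ℂ) = ((‖v₁‖ : ℂ)) ^ 2 := inner_self_eq_norm_sq_to_K v₁
  have hjj : (inner ℂ v₂ v₂ : ℂ) = ((‖v₂‖ : ℂ)) ^ 2 := inner_self_eq_norm_sq_to_K v₂
  have hconj : (inner ℂ v₂ v₁ : ℂ) = starRingEnd ℂ (inner ℂ v₁ v₂ : ℂ) :=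
    (inner_conj_symm (𝕜 := ℂ) v₂ v₁).symm
  have habs : (inner ℂ v₁ v₂ : ℂ) * starRingEnd ℂ (inner ℂ v₁ v₂ : ℂ)
      = ((‖(inner ℂ v₁ v₂ : ℂ)‖ : ℂ)) ^ 2 := by
    rw [Complex.mul_conj']
  simp only [Matrix.sub_apply, Matrix.smul_apply, one_apply, e00, e01, e10, e11, hii, hjj, hconj]
  simp only [if_pos rfl, if_neg (by decide : (0:Fin 2) ≠ 1), if_neg (by decide : (1:Fin 2) ≠ 0)]
  simp only [if_true, smul_eq_mul, mul_one, mul_zero]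
  rw [← habs]
  ring

-- Weinstein-Aronszajn step
lemma detA (n : ℕ) (hn : 2 ≤ n) (U : Matrix (Fin n) (Fin 2) ℂ) (V : Matrix (Fin 2) (Fin n) ℂ)
    (s : ℂ) (hs : s ≠ 0) :
    det (s • (1 : Matrix (Fin n) (Fin n) ℂ) - U * V)
      = s ^ (n - 2) * det (s • (1 : Matrix (Fin 2) (Fin 2) ℂ) - V * U) := by
  have h1 : s • (1 : Matrix (Fin n) (Fin n) ℂ) - U * V
      = s • ((1 : Matrix (Fin n) (Fin n) ℂ) - (s⁻¹ • U) * V) := by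
    rw [Matrix.smul_mul, smul_sub, smul_smul, mul_inv_cancel₀ hs, one_smul]
  have h2 : s • (1 : Matrix (Fin 2) (Fin 2) ℂ) - V * U
      = s • ((1 : Matrix (Fin 2) (Fin 2) ℂ) - V * (s⁻¹ • U)) := by
    rw [Matrix.mul_smul, smul_sub, smul_smul, mul_inv_cancel₀ hs, one_smul]
  rw [h1, h2, det_smul, det_smul, det_one_sub_mul_comm]
  simp only [Fintype.card_fin]
  rw [← mul_assoc]
  congr 1
  rw [← pow_add]
  congr 1
  omega

-- spectral side
lemma detB {n : ℕ} (R : Matrix (Fin n) (Fin n) ℂ) (hR : R.IsHermitian) (t : ℂ) :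
    det (t • (1 : Matrix (Fin n) (Fin n) ℂ) - R) = ∏ i, (t - (hR.eigenvalues i : ℂ)) := by
  set U := (hR.eigenvectorUnitary : Matrix (Fin n) (Fin n) ℂ)
  have hU : U * star U = 1 := (Matrix.mem_unitaryGroup_iff).mp hR.eigenvectorUnitary.2
  have key : t • (1 : Matrix (Fin n) (Fin n) ℂ) - R
      = U * (t • 1 - diagonal ((↑) ∘ hR.eigenvalues)) * star U := by
    rw [Matrix.mul_sub, Matrix.sub_mul, Matrix.mul_smul, mul_one, Matrix.smul_mul, hU]
    congr 1
    exact hR.spectral_theorem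
  rw [key, det_mul_right_comm, hU, one_mul]
  rw [smul_one_eq_diagonal, diagonal_sub, det_diagonal]
  rfl

theorem eigenvalues_two_signal_model
    (n : ℕ) (hn : 2 ≤ n)
    (v₁ v₂ : EuclideanSpace ℂ (Fin n))
    (hLI : LinearIndependent ℂ ![v₁, v₂])
    (σS1 σS2 σ2 : ℝ) (hS1 : 0 < σS1) (hS2 : 0 < σS2) (hσ : 0 < σ2)
    (R : Matrix (Fin n) (Fin n) ℂ)
    (hReq : R = (σS1 : ℂ) • vecMulVec v₁ (star v₁) + (σS2 : ℂ) • vecMulVec v₂ (star v₂)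
        + (σ2 : ℂ) • (1 : Matrix (Fin n) (Fin n) ℂ))
    (hR : R.IsHermitian)
    (lam1 lam2 : ℝ)
    (h1 : lam1 = σ2 + (σS1 * ‖v₁‖ ^ 2 + σS2 * ‖v₂‖ ^ 2) / 2
        + Real.sqrt ((σS1 * ‖v₁‖ ^ 2 - σS2 * ‖v₂‖ ^ 2) ^ 2
            + 4 * σS1 * σS2 * ‖(inner ℂ v₁ v₂ : ℂ)‖ ^ 2) / 2)
    (h2 : lam2 = σ2 + (σS1 * ‖v₁‖ ^ 2 + σS2 * ‖v₂‖ ^ 2) / 2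
        - Real.sqrt ((σS1 * ‖v₁‖ ^ 2 - σS2 * ‖v₂‖ ^ 2) ^ 2
            + 4 * σS1 * σS2 * ‖(inner ℂ v₁ v₂ : ℂ)‖ ^ 2) / 2) :
    Finset.univ.val.map hR.eigenvalues
      = lam1 ::ₘ lam2 ::ₘ Multiset.replicate (n - 2) σ2 := by
  set a : ℝ := σS1 * ‖v₁‖ ^ 2 with ha
  set d : ℝ := σS2 * ‖v₂‖ ^ 2 with hd
  set p : ℝ := σS1 * σS2 * ‖(inner ℂ v₁ v₂ : ℂ)‖ ^ 2 with hp
  have hpnn : 0 ≤ (a - d) ^ 2 + 4 * p := by positivity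
  have hr2 : Real.sqrt ((a - d) ^ 2 + 4 * p) ^ 2 = (a - d) ^ 2 + 4 * p :=
    Real.sq_sqrt hpnn
  have hsum : lam1 + lam2 = 2 * σ2 + a + d := by rw [h1, h2]; ring
  have hprod : (lam1 - σ2) * (lam2 - σ2) = a * d - p := by
    rw [h1, h2]
    have : (σ2 + (a + d) / 2 + Real.sqrt ((a - d) ^ 2 + 4 * p) / 2 - σ2)
        * (σ2 + (a + d) / 2 - Real.sqrt ((a - d) ^ 2 + 4 * p) / 2 - σ2)
        = ((a + d) ^ 2 - Real.sqrt ((a - d) ^ 2 + 4 * p) ^ 2) / 4 := by ring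
    rw [show 4 * σS1 * σS2 * ‖(inner ℂ v₁ v₂ : ℂ)‖ ^ 2 = 4 * p by rw [hp]; ring]
    rw [this, hr2]
    ring
  -- the two polynomials
  set M1 : Multiset ℂ := Finset.univ.val.map fun i => ((hR.eigenvalues i : ℝ) : ℂ) with hM1
  set M2 : Multiset ℂ :=
    (lam1 : ℂ) ::ₘ (lam2 : ℂ) ::ₘ Multiset.replicate (n - 2) ((σ2 : ℝ) : ℂ) with hM2
  have hpoly : (M1.map fun z => (X : ℂ[X]) - C z).prod
      = (M2.map fun z => (X : ℂ[X]) - C z).prod := by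
    apply Polynomial.eq_of_infinite_eval_eq
    apply Set.Infinite.mono (s := {(σ2 : ℂ)}ᶜ)
    swap
    · exact Set.Finite.infinite_compl (Set.finite_singleton _)
    intro t ht
    have hs : t - (σ2 : ℂ) ≠ 0 := sub_ne_zero.mpr ht
    have hev1 : ∀ (M : Multiset ℂ), eval t ((M.map fun z => (X : ℂ[X]) - C z).prod)
        = (M.map fun z => t - z).prod := by
      intro M
      rw [eval_multiset_prod, Multiset.map_map]
      congr 1
      apply Multiset.map_congr rfl
      intro z _
      simp
    have key : det (t • (1 : Matrix (Fin n) (Fin n) ℂ) - R)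
        = ((t - σ2) ^ (n - 2)
          * (((t - σ2) - (σS1 : ℂ) * (‖v₁‖ : ℂ) ^ 2) * ((t - σ2) - (σS2 : ℂ) * (‖v₂‖ : ℂ) ^ 2)
            - (σS1 : ℂ) * (σS2 : ℂ) * (‖(inner ℂ v₁ v₂ : ℂ)‖ : ℂ) ^ 2)) := by
      have hW : t • (1 : Matrix (Fin n) (Fin n) ℂ) - R
          = (t - (σ2 : ℂ)) • (1 : Matrix (Fin n) (Fin n) ℂ)
            - ((σS1 : ℂ) • vecMulVec v₁ (star v₁) + (σS2 : ℂ) • vecMulVec v₂ (star v₂)) := by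
        rw [hReq, sub_smul]; abel
      rw [hW, detC n hn v₁ v₂ σS1 σS2 _ hs (fun U V => detA n hn U V _ hs)]
    have hq : (((t - σ2) - (a : ℂ)) * ((t - σ2) - (d : ℂ)) - (p : ℂ))
        = (t - (lam1 : ℂ)) * (t - (lam2 : ℂ)) := by
      have hsum' : ((lam1 : ℂ) + (lam2 : ℂ)) = 2 * (σ2 : ℂ) + (a : ℂ) + (d : ℂ) := by
        exact_mod_cast congrArg Complex.ofReal hsum
      have hprod' : ((lam1 : ℂ) - σ2) * ((lam2 : ℂ) - σ2) = (a : ℂ) * d - p := by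
        exact_mod_cast congrArg Complex.ofReal hprod
      linear_combination (t - (σ2 : ℂ)) * hsum' - hprod'
    show eval t ((M1.map fun z => (X : ℂ[X]) - C z).prod)
        = eval t ((M2.map fun z => (X : ℂ[X]) - C z).prod)
    rw [hev1, hev1]
    have hdetB := detB R hR t
    have e1 : (Multiset.map (fun z => t - z) M1).prod = ∏ i, (t - (hR.eigenvalues i : ℂ)) := by
      rw [hM1, Multiset.map_map]
      rfl
    have e2 : (Multiset.map (fun z => t - z) M2).prod
        = (t - (lam1 : ℂ)) * ((t - (lam2 : ℂ)) * (t - (σ2 : ℂ)) ^ (n - 2)) := by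
      rw [hM2]
      simp [Multiset.map_replicate, Multiset.prod_replicate]
    rw [e1, e2, ← hdetB, key]
    rw [ha, hd, hp] at hq
    push_cast at hq ⊢
    linear_combination ((t - (σ2 : ℂ)) ^ (n - 2)) * hq
  have hroots := congrArg Polynomial.roots hpoly
  rw [Polynomial.roots_multiset_prod_X_sub_C, Polynomial.roots_multiset_prod_X_sub_C] at hroots
  apply Multiset.map_injective (f := fun x : ℝ => (x : ℂ)) Complex.ofReal_injective
  rw [Multiset.map_map] at *
  rw [Multiset.map_cons, Multiset.map_cons, Multiset.map_replicate]
  exact hroots
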